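/- For all 1 ≤ i ≤ n, the integers 1, q^m, q^{2m}, ..., q^{(i−1)m} are roots of the characteristic polynomial of the rank-metric lattice L_i(n,m;q). -/

import Mathlib

open Submodule

/-- The rank of a vector `v ∈ L^n`: the `Fq`-dimension of the `Fq`-span of its entries. -/
noncomputable def rkVec (Fq : Type*) {L : Type*} [Field Fq] [Field L] [Algebra Fq L]
    {n : ℕ} (v : Fin n → L) : ℕ :=
  Module.finrank Fq ↥(Submodule.span Fq (Set.range v))

/-- The rank-metric lattice `L_i(n,m;q)`: subspaces of `L^n` spanned by their vectors of
rank at most `i`. -/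
def RML (Fq L : Type*) [Field Fq] [Field L] [Algebra Fq L] (n i : ℕ) :
    Set (Submodule L (Fin n → L)) :=
  {X | X = Submodule.span L {x | x ∈ X ∧ rkVec Fq x ≤ i}}

/-- The meet in the rank-metric lattice: span of the rank-`≤ i` vectors of the intersection. -/
def rmlMeet (Fq : Type*) {L : Type*} [Field Fq] [Field L] [Algebra Fq L] {n : ℕ} (i : ℕ)
    (X Y : Submodule L (Fin n → L)) : Submodule L (Fin n → L) :=
  Submodule.span L {x | x ∈ X ⊓ Y ∧ rkVec Fq x ≤ i}

/-- `X` is a modular element of the rank-metric lattice `L_i`. -/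
def IsModularElt (Fq : Type*) {L : Type*} [Field Fq] [Field L] [Algebra Fq L] {n : ℕ} (i : ℕ)
    (X : Submodule L (Fin n → L)) : Prop :=
  ∀ Y ∈ RML Fq L n i,
    Module.finrank L ↥(rmlMeet Fq i X Y) + Module.finrank L ↥(X ⊔ Y)
      = Module.finrank L ↥X + Module.finrank L ↥Y

section Aux

variable {Fq L : Type*} [Field Fq] [Field L] [Algebra Fq L] {n : ℕ}

/-- maps killing X ≃ maps from the quotient -/
def kerEquiv {W : Type*} [AddCommGroup W] [Module L W] (X : Submodule L (Fin n → L)) :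
    {φ : (Fin n → L) →ₗ[L] W // X ≤ LinearMap.ker φ} ≃ (((Fin n → L) ⧸ X) →ₗ[L] W) where
  toFun φ := X.liftQ φ.1 φ.2
  invFun ψ := ⟨ψ ∘ₗ X.mkQ, fun x hx => by
    simp [LinearMap.mem_ker, (Submodule.Quotient.mk_eq_zero X).2 hx]⟩
  left_inv φ := Subtype.ext (X.liftQ_mkQ φ.1 φ.2)
  right_inv ψ := Submodule.linearMap_qext _ (X.liftQ_mkQ _ _)

/-- Singleton-type bound: any linear map to `L^j` with `j+1 ≤ n` has a nonzero
vector of rank at most `j+1` in its kernel. -/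
theorem exists_low_rank_ker [Fintype Fq] [FiniteDimensional Fq L] {j : ℕ} (hjn : j + 1 ≤ n)
    (φ : (Fin n → L) →ₗ[L] (Fin j → L)) :
    ∃ v, v ∈ LinearMap.ker φ ∧ v ≠ 0 ∧ rkVec Fq v ≤ j + 1 := by
  classical
  set ψ : (Fin n → L) →ₗ[L] (Fin j → L) × (Fin (n - (j+1)) → L) :=
    φ.prod (LinearMap.funLeft L L (Fin.castLE (by omega))) with hψ
  have hker : LinearMap.ker ψ ≠ ⊥ := by
    intro h
    have hinj : Function.Injective ψ := LinearMap.ker_eq_bot.mp h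
    have := LinearMap.finrank_le_finrank_of_injective hinj
    simp [Module.finrank_prod, Module.finrank_fin_fun] at this
    omega
  obtain ⟨v, hv, hv0⟩ := Submodule.ne_bot_iff _ |>.mp hker
  have hφv : φ v = 0 ∧ ∀ k : Fin (n - (j+1)), v (Fin.castLE (by omega) k) = 0 := by
    have := (LinearMap.mem_ker).mp hv
    rw [hψ] at this
    simp only [LinearMap.prod_apply, Function.prod, Prod.mk_eq_zero] at this
    exact ⟨this.1, fun k => congrFun this.2 k⟩
  refine ⟨v, LinearMap.mem_ker.mpr hφv.1, hv0, ?_⟩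
  -- rank bound
  set u : Fin (j+1) → L := fun k => v ⟨n - (j+1) + k, by omega⟩ with hu
  have hsub : Set.range v ⊆ insert 0 (Set.range u) := by
    rintro x ⟨l, rfl⟩
    rw [Set.mem_insert_iff]
    by_cases hl : (l : ℕ) < n - (j+1)
    · left
      have hc : Fin.castLE (by omega : n - (j+1) ≤ n) ⟨(l:ℕ), hl⟩ = l := Fin.ext rfl
      have := hφv.2 ⟨(l:ℕ), hl⟩
      rwa [hc] at this
    · right
      refine ⟨⟨(l : ℕ) - (n - (j+1)), by omega⟩, ?_⟩
      show v ⟨n - (j+1) + ((l:ℕ) - (n - (j+1))), by omega⟩ = v l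
      congr 1
      exact Fin.ext (by simp; omega)
  have hspan : Submodule.span Fq (Set.range v) ≤ Submodule.span Fq (Set.range u) := by
    have := Submodule.span_mono (R := Fq) hsub
    rwa [Submodule.span_insert_zero] at this
  have h1 : rkVec Fq v ≤ Module.finrank Fq ↥(Submodule.span Fq (Set.range u)) :=
    Submodule.finrank_mono hspan
  have h2 : Module.finrank Fq ↥(Submodule.span Fq (Set.range u)) ≤ j + 1 := by
    refine le_trans (finrank_span_le_card (Set.range u)) ?_
    rw [Set.toFinset_range]
    exact le_trans (Finset.card_image_le) (by simp)
  exact le_trans h1 h2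

end Aux

section Aux2

variable {Fq L : Type*} [Field Fq] [Field L] [Algebra Fq L] {n : ℕ}

theorem card_ker_le [Fintype L] {j : ℕ} (X : Submodule L (Fin n → L)) :
    Nat.card {φ : (Fin n → L) →ₗ[L] (Fin j → L) // X ≤ LinearMap.ker φ}
      = Fintype.card L ^ ((n - Module.finrank L ↥X) * j) := by
  classical
  rw [Nat.card_congr (kerEquiv (L := L) X)]
  haveI : Finite (((Fin n → L) ⧸ X) →ₗ[L] (Fin j → L)) :=
    Finite.of_injective (fun f => (f : ((Fin n → L) ⧸ X) → (Fin j → L))) DFunLike.coe_injective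
  haveI : Fintype (((Fin n → L) ⧸ X) →ₗ[L] (Fin j → L)) := Fintype.ofFinite _
  rw [Nat.card_eq_fintype_card, Module.card_eq_pow_finrank (K := L) (V := ((Fin n → L) ⧸ X) →ₗ[L] (Fin j → L)), Module.finrank_linearMap,
    Module.finrank_fin_fun]
  congr 2
  have h1 := Submodule.finrank_quotient_add_finrank X
  have h2 : Module.finrank L (Fin n → L) = n := Module.finrank_fin_fun L
  have h3 := Submodule.finrank_le X
  omega

end Aux2

open scoped Classical in
theorem charPoly_rml_roots (q m n : ℕ) (hq : IsPrimePow q) (hn : 2 ≤ n) (hm : 2 ≤ m)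
    (Fq L : Type) [Field Fq] [Field L] [Algebra Fq L] [Fintype Fq]
    (hcard : Fintype.card Fq = q) (hdim : Module.finrank Fq L = m)
    (i : ℕ) (hi : 1 ≤ i) (hin : i ≤ n)
    (μ : Submodule L (Fin n → L) → ℚ)
    (hμ : ∀ t ∈ RML Fq L n i,
      (∑ᶠ s ∈ {s | s ∈ RML Fq L n i ∧ s ≤ t}, μ s) = if t = ⊥ then 1 else 0) :
    ∀ j < i,
      (∑ᶠ X ∈ RML Fq L n i,
        μ X * ((q : ℚ) ^ (m * j)) ^ (n - Module.finrank L ↥X)) = 0 := by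
  intro j hj
  classical
  haveI : FiniteDimensional Fq L := FiniteDimensional.of_finrank_pos (by rw [hdim]; omega)
  haveI : Finite L := Module.finite_of_finite Fq
  haveI : Fintype L := Fintype.ofFinite L
  have hcardL : Fintype.card L = q ^ m := by
    rw [Module.card_eq_pow_finrank (K := Fq) (V := L), hcard, hdim]
  haveI : Finite (Submodule L (Fin n → L)) :=
    Finite.of_injective (fun X => (X : Set (Fin n → L))) SetLike.coe_injective
  haveI : Finite ((Fin n → L) →ₗ[L] (Fin j → L)) :=
    Finite.of_injective (fun f => (f : (Fin n → L) → (Fin j → L))) DFunLike.coe_injective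
  haveI : Fintype ((Fin n → L) →ₗ[L] (Fin j → L)) := Fintype.ofFinite _
  have hval : ∀ X : Submodule L (Fin n → L),
      ((q : ℚ) ^ (m * j)) ^ (n - Module.finrank L ↥X)
        = ((Finset.univ.filter
            (fun φ : (Fin n → L) →ₗ[L] (Fin j → L) => X ≤ LinearMap.ker φ)).card : ℚ) := by
    intro X
    have h2 : (Finset.univ.filter
        (fun φ : (Fin n → L) →ₗ[L] (Fin j → L) => X ≤ LinearMap.ker φ)).card
        = (q ^ m) ^ ((n - Module.finrank L ↥X) * j) := by
      rw [← Fintype.card_subtype, ← Nat.card_eq_fintype_card, card_ker_le, hcardL]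
    rw [h2]
    push_cast
    rw [← pow_mul, ← pow_mul]
    congr 1
    ring
  set S : Finset (Submodule L (Fin n → L)) := (Set.toFinite (RML Fq L n i)).toFinset with hS
  rw [finsum_mem_eq_finite_toFinset_sum _ (Set.toFinite _)]
  have step1 : (∑ X ∈ S, μ X * ((q : ℚ) ^ (m * j)) ^ (n - Module.finrank L ↥X))
      = ∑ φ ∈ (Finset.univ : Finset ((Fin n → L) →ₗ[L] (Fin j → L))),
          ∑ X ∈ S.filter (fun X => X ≤ LinearMap.ker φ), μ X := by
    have h1 : (∑ X ∈ S, μ X * ((q : ℚ) ^ (m * j)) ^ (n - Module.finrank L ↥X))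
        = ∑ X ∈ S, ∑ φ ∈ Finset.univ.filter
            (fun φ : (Fin n → L) →ₗ[L] (Fin j → L) => X ≤ LinearMap.ker φ), μ X := by
      refine Finset.sum_congr rfl (fun X _ => ?_)
      rw [hval X, Finset.sum_const, nsmul_eq_mul, mul_comm]
    rw [h1]
    simp_rw [Finset.sum_filter]
    exact Finset.sum_comm
  rw [step1]
  refine Finset.sum_eq_zero (fun φ _ => ?_)
  set K := Submodule.span L {x | x ∈ LinearMap.ker φ ∧ rkVec Fq x ≤ i} with hK
  have hKRML : K ∈ RML Fq L n i := by
    show K = Submodule.span L {x | x ∈ K ∧ rkVec Fq x ≤ i}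
    refine le_antisymm ?_ (Submodule.span_le.mpr (fun x hx => hx.1))
    rw [hK]
    exact Submodule.span_mono (fun x hx => ⟨Submodule.subset_span hx, hx.2⟩)
  have hKle : K ≤ LinearMap.ker φ := Submodule.span_le.mpr (fun x hx => hx.1)
  have hKne : K ≠ ⊥ := by
    obtain ⟨v, hvker, hv0, hvrk⟩ := exists_low_rank_ker (Fq := Fq) (by omega) φ
    intro hbot
    have hvK : v ∈ K := Submodule.subset_span ⟨hvker, le_trans hvrk (by omega)⟩
    rw [hbot] at hvK
    exact hv0 (by simpa using hvK)
  have hμK := hμ K hKRML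
  rw [if_neg hKne, finsum_mem_eq_finite_toFinset_sum _ (Set.toFinite _)] at hμK
  rw [← hμK]
  refine Finset.sum_congr ?_ (fun _ _ => rfl)
  ext X
  simp only [Finset.mem_filter, Set.Finite.mem_toFinset, Set.mem_setOf_eq, hS]
  constructor
  · rintro ⟨hX, hle⟩
    refine ⟨hX, ?_⟩
    calc X = Submodule.span L {x | x ∈ X ∧ rkVec Fq x ≤ i} := hX
      _ ≤ K := Submodule.span_mono (fun x hx => ⟨hle hx.1, hx.2⟩)
  · rintro ⟨hX, hle⟩
    exact ⟨hX, le_trans hle hKle⟩
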